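/- Let γ ∈ (0, 1/2] and set M := Ī − γ𝐐'. Then for every integer i ≥ 0, the spectral norm satisfies ‖(i+1)·M^{i+1}·Ī − i·M^{i}·Ī‖² ≤ 4. -/

import Mathlib

open Matrix Finset
open scoped Kronecker Matrix.Norms.L2Operator

noncomputable section

/-- The `nd × nd` averaging matrix `(1/n)(1ₙ1ₙᵀ ⊗ I_d)`. -/
def avgMat (n d : ℕ) : Matrix (Fin n × Fin d) (Fin n × Fin d) ℝ :=
  ((n : ℝ)⁻¹ • Matrix.of fun _ _ : Fin n => (1 : ℝ)) ⊗ₖ (1 : Matrix (Fin d) (Fin d) ℝ)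

/-- `Ī := I_{nd} − (1/n)(1ₙ1ₙᵀ ⊗ I_d)`. -/
def Ibar (n d : ℕ) : Matrix (Fin n × Fin d) (Fin n × Fin d) ℝ :=
  1 - avgMat n d

/-- `𝐐' := (Iₙ − Q) ⊗ I_d`. -/
def Qprime {n : ℕ} (Q : Matrix (Fin n) (Fin n) ℝ) (d : ℕ) :
    Matrix (Fin n × Fin d) (Fin n × Fin d) ℝ :=
  (1 - Q) ⊗ₖ (1 : Matrix (Fin d) (Fin d) ℝ)

/-! ### Auxiliary scalar inequalities -/

lemma aux_bern : ∀ (i : ℕ) (μ : ℝ), 0 ≤ μ → μ ≤ 1 → (i : ℝ) * μ ^ i * (1 - μ) ≤ 1 := by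
  intro i
  induction i with
  | zero => intro μ h0 h1; simp
  | succ j ih =>
    intro μ h0 h1
    have h2 := ih μ h0 h1
    have h3 : μ ^ (j + 1) ≤ 1 := pow_le_one₀ h0 h1
    have h4 : 0 ≤ μ ^ j := pow_nonneg h0 j
    have e1 : μ * ((j:ℝ) * μ ^ j * (1 - μ)) ≤ μ * 1 := mul_le_mul_of_nonneg_left h2 h0
    have e2 : μ ^ (j + 1) * (1 - μ) ≤ 1 * (1 - μ) := mul_le_mul_of_nonneg_right h3 (by linarith)
    push_cast
    rw [pow_succ] at e2 ⊢
    nlinarith [e1, e2]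

lemma aux_scalar (i : ℕ) (μ : ℝ) (h0 : 0 ≤ μ) (h1 : μ ≤ 1) :
    |((i : ℝ) + 1) * μ ^ (i + 1) - (i : ℝ) * μ ^ i| ≤ 1 := by
  have hb := aux_bern i μ h0 h1
  have h4 : 0 ≤ μ ^ i := pow_nonneg h0 i
  have h5 : μ ^ (i + 1) ≤ 1 := pow_le_one₀ h0 h1
  have hs : μ ^ (i + 1) = μ ^ i * μ := pow_succ μ i
  have hi : (0:ℝ) ≤ (i:ℝ) := Nat.cast_nonneg i
  rw [abs_le]
  constructor <;> nlinarith [mul_nonneg hi (mul_nonneg h4 (sub_nonneg.2 h1))]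

/-! ### Operator norm of a diagonal matrix -/

lemma diag_norm_le {ι : Type*} [Fintype ι] [DecidableEq ι] {v : ι → ℝ} {c : ℝ} (hc : 0 ≤ c)
    (h : ∀ j, |v j| ≤ c) : ‖Matrix.diagonal v‖ ≤ c := by
  rw [Matrix.l2_opNorm_def]
  refine ContinuousLinearMap.opNorm_le_bound _ hc fun x => ?_
  have hx : ∀ y : EuclideanSpace ℝ ι, ‖y‖ = Real.sqrt (∑ j, (y j) ^ 2) := by
    intro y
    rw [EuclideanSpace.norm_eq]
    congr 1
    exact Finset.sum_congr rfl fun j _ => by rw [Real.norm_eq_abs, sq_abs]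
  have happ : ∀ j, ((Matrix.toEuclideanLin ≪≫ₗ LinearMap.toContinuousLinearMap)
      (Matrix.diagonal v) x) j = v j * x j := by
    intro j
    simp [Matrix.toEuclideanLin_apply, Matrix.mulVec_diagonal]
  rw [hx, hx]
  have : ∑ j, (((Matrix.toEuclideanLin ≪≫ₗ LinearMap.toContinuousLinearMap)
      (Matrix.diagonal v) x) j) ^ 2 ≤ c ^ 2 * ∑ j, (x j) ^ 2 := by
    rw [Finset.mul_sum]
    refine Finset.sum_le_sum fun j _ => ?_
    rw [happ j, mul_pow]
    have : (v j) ^ 2 ≤ c ^ 2 := by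
      have := h j
      nlinarith [abs_nonneg (v j), sq_abs (v j)]
    nlinarith [sq_nonneg (x j)]
  calc Real.sqrt (∑ j, (((Matrix.toEuclideanLin ≪≫ₗ LinearMap.toContinuousLinearMap)
      (Matrix.diagonal v) x) j) ^ 2) ≤ Real.sqrt (c ^ 2 * ∑ j, (x j) ^ 2) :=
        Real.sqrt_le_sqrt this
    _ = c * Real.sqrt (∑ j, (x j) ^ 2) := by
        rw [Real.sqrt_mul (sq_nonneg c), Real.sqrt_sq hc]

/-! ### Key norm bound for PSD contractions -/

lemma key {ι : Type*} [Fintype ι] [DecidableEq ι] [Nonempty ι] {A : Matrix ι ι ℝ}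
    (h0 : A.PosSemidef) (h1 : (1 - A).PosSemidef) (i : ℕ) :
    ‖((i : ℝ) + 1) • A ^ (i + 1) - (i : ℝ) • A ^ i‖ ≤ 1 := by
  haveI : Nontrivial (Matrix ι ι ℝ) := by
    refine nontrivial_of_ne 0 1 fun h => ?_
    have := congrFun (congrFun h (Classical.arbitrary ι)) (Classical.arbitrary ι)
    simp [Matrix.one_apply] at this
  have hA : A.IsHermitian := h0.1
  set U : Matrix ι ι ℝ := (hA.eigenvectorUnitary : Matrix ι ι ℝ) with hU
  have hUmem : U ∈ unitary (Matrix ι ι ℝ) := hA.eigenvectorUnitary.2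
  set μ := hA.eigenvalues with hμdef
  have hμ0 : ∀ j, 0 ≤ μ j := h0.eigenvalues_nonneg
  have hμ1 : ∀ j, μ j ≤ 1 := by
    intro j
    have hv := hA.mulVec_eigenvectorBasis j
    have hq := h1.dotProduct_mulVec_nonneg (⇑(hA.eigenvectorBasis j))
    set v : ι → ℝ := ⇑(hA.eigenvectorBasis j) with hvdef
    have hvv : v ⬝ᵥ v = 1 := by
      have h2 : ‖hA.eigenvectorBasis j‖ = 1 := hA.eigenvectorBasis.orthonormal.1 j
      have h3 := EuclideanSpace.inner_eq_star_dotProduct (hA.eigenvectorBasis j)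
        (hA.eigenvectorBasis j)
      have h4 : (inner ℝ (hA.eigenvectorBasis j) (hA.eigenvectorBasis j) : ℝ) = 1 := by
        rw [real_inner_self_eq_norm_sq, h2]; norm_num
      rw [h4] at h3
      simpa [star_trivial] using h3.symm
    have hvq : star v ⬝ᵥ ((1 - A) *ᵥ v) = 1 - μ j := by
      rw [star_trivial, Matrix.sub_mulVec, Matrix.one_mulVec, dotProduct_sub, hvv, hv]
      simp [dotProduct_smul, hvv, smul_eq_mul, hμdef]
    rw [hvq] at hq
    linarith
  have hsU : star U * U = 1 := (Unitary.mem_iff.mp hUmem).1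
  have hUs : U * star U = 1 := (Unitary.mem_iff.mp hUmem).2
  have hspec : A = U * Matrix.diagonal μ * star U := by
    have h2 := hA.spectral_theorem
    rwa [RCLike.ofReal_real_eq_id, Function.id_comp] at h2
  have hconj : ∀ X Y : Matrix ι ι ℝ, (U * X * star U) * (U * Y * star U) = U * (X * Y) * star U := by
    intro X Y
    calc (U * X * star U) * (U * Y * star U)
        = U * (X * ((star U * U) * (Y * star U))) := by simp only [Matrix.mul_assoc]
      _ = U * (X * Y) * star U := by rw [hsU, Matrix.one_mul]; simp only [Matrix.mul_assoc]
  have hpow : ∀ k : ℕ, A ^ k = U * (Matrix.diagonal μ) ^ k * star U := by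
    intro k
    induction k with
    | zero => simp [pow_zero, hUs]
    | succ k ih => rw [pow_succ, pow_succ, ih, hspec, hconj]
  have hE : ((i : ℝ) + 1) • A ^ (i + 1) - (i : ℝ) • A ^ i
      = U * Matrix.diagonal (fun j => ((i : ℝ) + 1) * (μ j) ^ (i + 1) - (i : ℝ) * (μ j) ^ i)
        * star U := by
    rw [hpow (i + 1), hpow i]
    have hd : (Matrix.diagonal fun j => ((i : ℝ) + 1) * (μ j) ^ (i + 1) - (i : ℝ) * (μ j) ^ i)
        = ((i : ℝ) + 1) • (Matrix.diagonal μ) ^ (i + 1) - (i : ℝ) • (Matrix.diagonal μ) ^ i := by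
      rw [Matrix.diagonal_pow, Matrix.diagonal_pow]
      ext j k
      rcases eq_or_ne j k with h | h
      · subst h; simp [Matrix.diagonal_apply_eq, smul_eq_mul]
      · simp [Matrix.diagonal_apply_ne _ h, h]
    rw [hd]
    simp only [Matrix.mul_sub, Matrix.sub_mul, Matrix.mul_smul, Matrix.smul_mul]
  rw [hE]
  have hDle : ‖Matrix.diagonal (fun j => ((i : ℝ) + 1) * (μ j) ^ (i + 1) - (i : ℝ) * (μ j) ^ i)‖
      ≤ 1 := diag_norm_le zero_le_one fun j => aux_scalar i (μ j) (hμ0 j) (hμ1 j)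
  have hnU : ‖U‖ = 1 := CStarRing.norm_of_mem_unitary hUmem
  have hnsU : ‖star U‖ = 1 := CStarRing.norm_of_mem_unitary (Unitary.star_mem hUmem)
  calc ‖U * Matrix.diagonal (fun j => ((i : ℝ) + 1) * (μ j) ^ (i + 1) - (i : ℝ) * (μ j) ^ i)
        * star U‖
      ≤ ‖U * Matrix.diagonal (fun j => ((i : ℝ) + 1) * (μ j) ^ (i + 1) - (i : ℝ) * (μ j) ^ i)‖
        * ‖star U‖ := Matrix.l2_opNorm_mul _ _
    _ ≤ (‖U‖ * ‖Matrix.diagonal (fun j => ((i : ℝ) + 1) * (μ j) ^ (i + 1) - (i : ℝ) * (μ j) ^ i)‖)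
        * ‖star U‖ := by
        exact mul_le_mul_of_nonneg_right (Matrix.l2_opNorm_mul _ _) (norm_nonneg _)
    _ ≤ 1 := by rw [hnU, hnsU]; simpa using hDle

/-! ### Quadratic-form estimates for doubly stochastic matrices -/

lemma quad_le {n : ℕ} {Q : Matrix (Fin n) (Fin n) ℝ} (hQnonneg : ∀ i j, 0 ≤ Q i j)
    (hQrow : ∀ i, ∑ j, Q i j = 1) (hQcol : ∀ j, ∑ i, Q i j = 1) (x : Fin n → ℝ) (s : ℝ)
    (hs : s ^ 2 = 1) : s * (x ⬝ᵥ (Q *ᵥ x)) ≤ x ⬝ᵥ x := by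
  have h0 : 0 ≤ ∑ i, ∑ j, Q i j * (s * x i - x j) ^ 2 :=
    Finset.sum_nonneg fun i _ => Finset.sum_nonneg fun j _ =>
      mul_nonneg (hQnonneg i j) (sq_nonneg _)
  have hexp : ∑ i, ∑ j, Q i j * (s * x i - x j) ^ 2
      = 2 * (x ⬝ᵥ x) - 2 * (s * (x ⬝ᵥ (Q *ᵥ x))) := by
    have e : ∀ i j, Q i j * (s * x i - x j) ^ 2
        = Q i j * (x i) ^ 2 + Q i j * (x j) ^ 2 - 2 * s * (Q i j * (x i * x j)) := by
      intro i j; linear_combination (Q i j * (x i) ^ 2) * hs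
    have hA : ∑ i : Fin n, ∑ j, Q i j * (x i) ^ 2 = ∑ i, (x i) ^ 2 :=
      Finset.sum_congr rfl fun i _ => by rw [← Finset.sum_mul, hQrow, one_mul]
    have hB : ∑ i : Fin n, ∑ j, Q i j * (x j) ^ 2 = ∑ j, (x j) ^ 2 := by
      rw [Finset.sum_comm]
      exact Finset.sum_congr rfl fun j _ => by rw [← Finset.sum_mul, hQcol, one_mul]
    have hC : x ⬝ᵥ (Q *ᵥ x) = ∑ i, ∑ j, Q i j * (x i * x j) := by
      simp only [dotProduct, mulVec, Finset.mul_sum]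
      exact Finset.sum_congr rfl fun i _ => Finset.sum_congr rfl fun j _ => by ring
    have hD : x ⬝ᵥ x = ∑ i, (x i) ^ 2 := by simp [dotProduct, sq]
    calc ∑ i, ∑ j, Q i j * (s * x i - x j) ^ 2
        = ∑ i, ∑ j, (Q i j * (x i) ^ 2 + Q i j * (x j) ^ 2 - 2 * s * (Q i j * (x i * x j))) :=
          Finset.sum_congr rfl fun i _ => Finset.sum_congr rfl fun j _ => e i j
      _ = (∑ i, ∑ j, Q i j * (x i) ^ 2) + (∑ i, ∑ j, Q i j * (x j) ^ 2)
          - 2 * s * (∑ i, ∑ j, Q i j * (x i * x j)) := by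
          simp only [Finset.sum_add_distrib, Finset.sum_sub_distrib, Finset.mul_sum]
      _ = 2 * (x ⬝ᵥ x) - 2 * (s * (x ⬝ᵥ (Q *ᵥ x))) := by
          rw [hA, hB, hC, hD]; ring
  linarith

/-! ### Kronecker product with the identity preserves positive semidefiniteness -/

lemma kron_psd {n d : ℕ} {B : Matrix (Fin n) (Fin n) ℝ} (h : B.PosSemidef) :
    (B ⊗ₖ (1 : Matrix (Fin d) (Fin d) ℝ)).PosSemidef := by
  refine Matrix.PosSemidef.of_dotProduct_mulVec_nonneg ?_ ?_
  · have hB := h.1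
    ext ⟨a, b⟩ ⟨c, e⟩
    have hBe : B c a = B a c := by
      have := congrFun (congrFun hB a) c
      simpa [Matrix.conjTranspose_apply] using this
    simp only [Matrix.conjTranspose_apply, Matrix.kroneckerMap_apply, Matrix.one_apply, star_trivial]
    rcases eq_or_ne b e with hbe | hbe
    · subst hbe; simp [hBe]
    · simp [hbe, Ne.symm hbe]
  · intro x
    rw [star_trivial]
    have hrw : x ⬝ᵥ ((B ⊗ₖ (1 : Matrix (Fin d) (Fin d) ℝ)) *ᵥ x)
        = ∑ k : Fin d, (fun a => x (a, k)) ⬝ᵥ (B *ᵥ fun a => x (a, k)) := by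
      simp only [dotProduct, mulVec, Matrix.kroneckerMap_apply, Matrix.one_apply,
        Fintype.sum_prod_type]
      rw [Finset.sum_comm]
      refine Finset.sum_congr rfl fun k _ => Finset.sum_congr rfl fun a _ => ?_
      congr 1
      rw [Finset.sum_comm]
      simp only [mul_ite, mul_one, mul_zero, ite_mul, zero_mul]
      rw [Finset.sum_comm]
      refine Finset.sum_congr rfl fun c _ => ?_
      simp [Finset.sum_ite_eq]
    rw [hrw]
    refine Finset.sum_nonneg fun k _ => ?_
    have := h.dotProduct_mulVec_nonneg (fun a => x (a, k))
    simpa [star_trivial] using this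

/-! ### The `n × n` reduction of the matrix `M` -/

def Jmat (n : ℕ) : Matrix (Fin n) (Fin n) ℝ := Matrix.of fun _ _ => (1 : ℝ)
def Pmat (n : ℕ) : Matrix (Fin n) (Fin n) ℝ := 1 - (n : ℝ)⁻¹ • Jmat n
def Bmat (n : ℕ) (γ : ℝ) (Q : Matrix (Fin n) (Fin n) ℝ) : Matrix (Fin n) (Fin n) ℝ :=
  Pmat n - γ • (1 - Q)

lemma subk {n d : ℕ} (X Y : Matrix (Fin n) (Fin n) ℝ) (Z : Matrix (Fin d) (Fin d) ℝ) :
    (X - Y) ⊗ₖ Z = X ⊗ₖ Z - Y ⊗ₖ Z := by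
  ext ⟨a, b⟩ ⟨c, e⟩
  simp [Matrix.kroneckerMap_apply, Matrix.sub_apply]
  ring

lemma M_eq {n : ℕ} (d : ℕ) (γ : ℝ) (Q : Matrix (Fin n) (Fin n) ℝ) :
    Ibar n d - γ • Qprime Q d = Bmat n γ Q ⊗ₖ (1 : Matrix (Fin d) (Fin d) ℝ) := by
  rw [Ibar, avgMat, Bmat, Pmat, Jmat, Qprime, ← Matrix.smul_kronecker, subk, subk,
    ← Matrix.one_kronecker_one]

lemma Ibar_eq {n : ℕ} (d : ℕ) :
    Ibar n d = Pmat n ⊗ₖ (1 : Matrix (Fin d) (Fin d) ℝ) := by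
  rw [Ibar, avgMat, Pmat, Jmat, subk, ← Matrix.one_kronecker_one]

lemma one_sub_kron {n d : ℕ} (B : Matrix (Fin n) (Fin n) ℝ) :
    (1 : Matrix (Fin n × Fin d) (Fin n × Fin d) ℝ) - B ⊗ₖ (1 : Matrix (Fin d) (Fin d) ℝ)
      = (1 - B) ⊗ₖ (1 : Matrix (Fin d) (Fin d) ℝ) := by
  rw [subk, ← Matrix.one_kronecker_one]

lemma hBJ {n : ℕ} (hn : 0 < n) (γ : ℝ) {Q : Matrix (Fin n) (Fin n) ℝ}
    (hQrow : ∀ i, ∑ j, Q i j = 1) : Bmat n γ Q * Jmat n = 0 := by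
  ext a c
  simp only [Matrix.mul_apply, Jmat, Matrix.of_apply, mul_one, Matrix.zero_apply]
  have h1 : ∑ k, Pmat n a k = 0 := by
    simp [Pmat, Jmat, Matrix.sub_apply, Matrix.smul_apply, Matrix.one_apply,
      Finset.sum_sub_distrib, Finset.sum_ite_eq]
    field_simp
    norm_num
  have h2 : ∑ k, ((1 : Matrix (Fin n) (Fin n) ℝ) - Q) a k = 0 := by
    simp [Matrix.sub_apply, Matrix.one_apply, Finset.sum_sub_distrib, hQrow,
      Finset.sum_ite_eq]
  calc ∑ k, Bmat n γ Q a k = ∑ k, (Pmat n a k - γ * ((1 : Matrix (Fin n) (Fin n) ℝ) - Q) a k) := by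
        refine Finset.sum_congr rfl fun k _ => ?_
        simp [Bmat, Matrix.sub_apply, Matrix.smul_apply, smul_eq_mul]
    _ = 0 := by
        rw [Finset.sum_sub_distrib, h1, ← Finset.mul_sum, h2]
        ring

lemma hBP {n : ℕ} (hn : 0 < n) (γ : ℝ) {Q : Matrix (Fin n) (Fin n) ℝ}
    (hQrow : ∀ i, ∑ j, Q i j = 1) : Bmat n γ Q * Pmat n = Bmat n γ Q := by
  rw [Pmat, Matrix.mul_sub, Matrix.mul_one, Matrix.mul_smul, hBJ hn γ hQrow]
  simp

lemma Bmat_herm {n : ℕ} (γ : ℝ) {Q : Matrix (Fin n) (Fin n) ℝ} (hQsymm : Q.IsSymm) :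
    (Bmat n γ Q).IsHermitian := by
  ext a c
  have hQs : Q c a = Q a c := by
    have := congrFun (congrFun hQsymm a) c
    simpa [Matrix.transpose_apply] using this
  simp only [Matrix.conjTranspose_apply, star_trivial, Bmat, Pmat, Jmat, Matrix.sub_apply,
    Matrix.smul_apply, Matrix.one_apply, Matrix.of_apply, smul_eq_mul, hQs]
  rcases eq_or_ne a c with h | h
  · subst h; ring
  · simp [h, Ne.symm h]

lemma Bmat_psd {n : ℕ} (hn : 0 < n) {γ : ℝ} (hγ0 : 0 < γ) (hγ1 : γ ≤ 1 / 2)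
    {Q : Matrix (Fin n) (Fin n) ℝ} (hQsymm : Q.IsSymm) (hQnonneg : ∀ i j, 0 ≤ Q i j)
    (hQrow : ∀ i, ∑ j, Q i j = 1) (hQcol : ∀ j, ∑ i, Q i j = 1) :
    (Bmat n γ Q).PosSemidef := by
  have hnR : (0 : ℝ) < n := by exact_mod_cast hn
  refine Matrix.PosSemidef.of_dotProduct_mulVec_nonneg (Bmat_herm γ hQsymm) fun x => ?_
  rw [star_trivial]
  set s := ∑ j, x j with hs
  set y : Fin n → ℝ := fun a => x a - s / n with hy
  have hysum : ∑ a, y a = 0 := by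
    simp only [hy, Finset.sum_sub_distrib, Finset.sum_const, Finset.card_univ, Fintype.card_fin,
      nsmul_eq_mul, ← hs]
    field_simp
    ring
  have hxy2 : x = fun a => y a + s / n := funext fun a => by simp [hy]
  have hPx : Pmat n *ᵥ x = y := by
    ext a
    simp only [Pmat, Jmat, Matrix.sub_mulVec, Matrix.smul_mulVec, Matrix.one_mulVec,
      Pi.sub_apply, Pi.smul_apply, smul_eq_mul, hy]
    have : (Matrix.of fun _ _ : Fin n => (1:ℝ)) *ᵥ x = fun _ => s := by
      ext b; simp [Matrix.mulVec, dotProduct, hs]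
    rw [this]
    field_simp
  have hconst : ((1 : Matrix (Fin n) (Fin n) ℝ) - Q) *ᵥ (fun _ => s / n) = 0 := by
    ext a
    simp only [Matrix.mulVec, dotProduct, Pi.zero_apply]
    rw [← Finset.sum_mul]
    have : ∑ j, ((1 : Matrix (Fin n) (Fin n) ℝ) - Q) a j = 0 := by
      simp [Matrix.sub_apply, Matrix.one_apply, Finset.sum_sub_distrib, hQrow, Finset.sum_ite_eq]
    rw [this, zero_mul]
  have hQxy : ((1 : Matrix (Fin n) (Fin n) ℝ) - Q) *ᵥ x = ((1 : Matrix (Fin n) (Fin n) ℝ) - Q) *ᵥ y := by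
    conv_lhs => rw [hxy2]
    have : (fun a => y a + s / n) = y + (fun _ => s / n) := rfl
    rw [this, Matrix.mulVec_add, hconst, add_zero]
  have hBx : Bmat n γ Q *ᵥ x = y - γ • (((1 : Matrix (Fin n) (Fin n) ℝ) - Q) *ᵥ y) := by
    rw [Bmat, Matrix.sub_mulVec, Matrix.smul_mulVec, hPx, hQxy]
  have hsum0 : ∑ a, (((1 : Matrix (Fin n) (Fin n) ℝ) - Q) *ᵥ y) a = 0 := by
    simp only [Matrix.mulVec, dotProduct]
    rw [Finset.sum_comm]
    refine Finset.sum_eq_zero fun j _ => ?_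
    rw [← Finset.sum_mul]
    have : ∑ a, ((1 : Matrix (Fin n) (Fin n) ℝ) - Q) a j = 0 := by
      simp [Matrix.sub_apply, Matrix.one_apply, Finset.sum_sub_distrib, hQcol,
        Finset.sum_ite_eq']
    rw [this, zero_mul]
  have hdot_shift : ∀ w : Fin n → ℝ, (∑ a, w a = 0) → x ⬝ᵥ w = y ⬝ᵥ w := by
    intro w hw
    conv_lhs => rw [hxy2]
    simp only [dotProduct, add_mul]
    rw [Finset.sum_add_distrib, ← Finset.mul_sum, hw, mul_zero, add_zero]
  have hxyd : x ⬝ᵥ y = y ⬝ᵥ y := hdot_shift y hysum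
  have hxQyd : x ⬝ᵥ (((1 : Matrix (Fin n) (Fin n) ℝ) - Q) *ᵥ y)
      = y ⬝ᵥ (((1 : Matrix (Fin n) (Fin n) ℝ) - Q) *ᵥ y) := hdot_shift _ hsum0
  have hfinal : x ⬝ᵥ (Bmat n γ Q *ᵥ x)
      = y ⬝ᵥ y - γ * (y ⬝ᵥ y - y ⬝ᵥ (Q *ᵥ y)) := by
    rw [hBx, dotProduct_sub, dotProduct_smul, smul_eq_mul, hxyd, hxQyd,
      Matrix.sub_mulVec, Matrix.one_mulVec, dotProduct_sub]
  rw [hfinal]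
  have hyQ := quad_le hQnonneg hQrow hQcol y (-1) (by norm_num)
  have hyy : 0 ≤ y ⬝ᵥ y := by
    have : y ⬝ᵥ y = ∑ a, (y a) ^ 2 := by simp [dotProduct, sq]
    rw [this]; positivity
  nlinarith [mul_nonneg hγ0.le (by linarith : (0:ℝ) ≤ y ⬝ᵥ y + y ⬝ᵥ (Q *ᵥ y)),
    mul_nonneg (by linarith : (0:ℝ) ≤ 1 - 2 * γ) hyy]

lemma one_sub_Bmat_psd {n : ℕ} (hn : 0 < n) {γ : ℝ} (hγ0 : 0 < γ)
    {Q : Matrix (Fin n) (Fin n) ℝ} (hQsymm : Q.IsSymm) (hQnonneg : ∀ i j, 0 ≤ Q i j)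
    (hQrow : ∀ i, ∑ j, Q i j = 1) (hQcol : ∀ j, ∑ i, Q i j = 1) :
    ((1 : Matrix (Fin n) (Fin n) ℝ) - Bmat n γ Q).PosSemidef := by
  have hnR : (0 : ℝ) < n := by exact_mod_cast hn
  have hrw : (1 : Matrix (Fin n) (Fin n) ℝ) - Bmat n γ Q
      = (n : ℝ)⁻¹ • Jmat n + γ • ((1 : Matrix (Fin n) (Fin n) ℝ) - Q) := by
    rw [Bmat, Pmat]
    abel
  refine Matrix.PosSemidef.of_dotProduct_mulVec_nonneg ?_ ?_
  · rw [hrw]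
    have h1 : ((n : ℝ)⁻¹ • Jmat n).IsHermitian := by
      ext a c; simp [Matrix.conjTranspose_apply, Jmat, Matrix.smul_apply]
    have h2 : (((1 : Matrix (Fin n) (Fin n) ℝ) - Q)).IsHermitian := by
      ext a c
      have hQs : Q c a = Q a c := by
        have := congrFun (congrFun hQsymm a) c
        simpa [Matrix.transpose_apply] using this
      simp only [Matrix.conjTranspose_apply, star_trivial, Matrix.sub_apply, Matrix.one_apply, hQs]
      rcases eq_or_ne a c with h | h
      · subst h; ring
      · simp [h, Ne.symm h]
    have h3 : (γ • ((1 : Matrix (Fin n) (Fin n) ℝ) - Q)).IsHermitian := by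
      show _ᴴ = _
      rw [Matrix.conjTranspose_smul, h2]
      simp
    exact h1.add h3
  · intro x
    rw [star_trivial, hrw, Matrix.add_mulVec, dotProduct_add,
      Matrix.smul_mulVec, Matrix.smul_mulVec, dotProduct_smul,
      dotProduct_smul]
    have hJ : x ⬝ᵥ (Jmat n *ᵥ x) = (∑ j, x j) * (∑ j, x j) := by
      simp only [Jmat, Matrix.mulVec, dotProduct, Matrix.of_apply, one_mul]
      rw [← Finset.sum_mul]
    have h1 : 0 ≤ (n : ℝ)⁻¹ • (x ⬝ᵥ (Jmat n *ᵥ x)) := by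
      rw [smul_eq_mul, hJ]
      have h4 := sq_nonneg (∑ j, x j)
      have h5 : (0:ℝ) ≤ (n : ℝ)⁻¹ := by positivity
      nlinarith
    have h2 : 0 ≤ x ⬝ᵥ (((1 : Matrix (Fin n) (Fin n) ℝ) - Q) *ᵥ x) := by
      rw [Matrix.sub_mulVec, Matrix.one_mulVec, dotProduct_sub]
      have := quad_le hQnonneg hQrow hQcol x 1 (by norm_num)
      linarith
    have := mul_nonneg hγ0.le h2
    simp only [smul_eq_mul] at h1 ⊢
    linarith

/-- Let `γ ∈ (0, 1/2]` and set `M := Ī − γ𝐐'`.  Then for every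
integer `i ≥ 0`, the spectral norm satisfies `‖(i+1)·M^{i+1}·Ī − i·M^{i}·Ī‖² ≤ 4`. -/
theorem spectral_norm_diff_pow_le_four {n d : ℕ} (hn : 2 ≤ n) (hd : 1 ≤ d)
    (Q : Matrix (Fin n) (Fin n) ℝ)
    (hQsymm : Q.IsSymm)
    (hQnonneg : ∀ i j, 0 ≤ Q i j)
    (hQrow : ∀ i, ∑ j, Q i j = 1)
    (hQcol : ∀ j, ∑ i, Q i j = 1)
    (hQherm : Q.IsHermitian)
    (hQsorted : ∀ i j : Fin n, i ≤ j → hQherm.eigenvalues j ≤ hQherm.eigenvalues i)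
    (hQeig1 : hQherm.eigenvalues ⟨0, by omega⟩ = 1)
    (hQeig2 : hQherm.eigenvalues ⟨1, by omega⟩ < 1)
    (hQeign : -1 < hQherm.eigenvalues ⟨n - 1, by omega⟩)
    (γ : ℝ) (hγ0 : 0 < γ) (hγ1 : γ ≤ 1 / 2) :
    ∀ i : ℕ,
      ‖((i : ℝ) + 1) • ((Ibar n d - γ • Qprime Q d) ^ (i + 1) * Ibar n d)
          - (i : ℝ) • ((Ibar n d - γ • Qprime Q d) ^ i * Ibar n d)‖ ^ 2 ≤ 4 := by
  intro p
  haveI : Nonempty (Fin n) := ⟨⟨0, by omega⟩⟩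
  haveI : Nonempty (Fin d) := ⟨⟨0, by omega⟩⟩
  have hn0 : 0 < n := by omega
  have hBpsd := Bmat_psd hn0 hγ0 hγ1 hQsymm hQnonneg hQrow hQcol
  have h1Bpsd := one_sub_Bmat_psd hn0 hγ0 hQsymm hQnonneg hQrow hQcol
  have hMpsd : (Bmat n γ Q ⊗ₖ (1 : Matrix (Fin d) (Fin d) ℝ)).PosSemidef := kron_psd hBpsd
  have h1Mpsd : ((1 : Matrix (Fin n × Fin d) (Fin n × Fin d) ℝ)
      - Bmat n γ Q ⊗ₖ (1 : Matrix (Fin d) (Fin d) ℝ)).PosSemidef := by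
    rw [one_sub_kron]; exact kron_psd h1Bpsd
  have hMI : (Bmat n γ Q ⊗ₖ (1 : Matrix (Fin d) (Fin d) ℝ)) * Ibar n d
      = Bmat n γ Q ⊗ₖ (1 : Matrix (Fin d) (Fin d) ℝ) := by
    rw [Ibar_eq, ← Matrix.mul_kronecker_mul, hBP hn0 γ hQrow, Matrix.one_mul]
  rw [M_eq d γ Q]
  have e2 : (Bmat n γ Q ⊗ₖ (1 : Matrix (Fin d) (Fin d) ℝ)) ^ (p + 1) * Ibar n d
      = (Bmat n γ Q ⊗ₖ (1 : Matrix (Fin d) (Fin d) ℝ)) ^ (p + 1) := by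
    rw [pow_succ, Matrix.mul_assoc, hMI]
  have e3 : (p : ℝ) • ((Bmat n γ Q ⊗ₖ (1 : Matrix (Fin d) (Fin d) ℝ)) ^ p * Ibar n d)
      = (p : ℝ) • (Bmat n γ Q ⊗ₖ (1 : Matrix (Fin d) (Fin d) ℝ)) ^ p := by
    cases p with
    | zero => simp
    | succ k => rw [pow_succ, Matrix.mul_assoc, hMI]
  rw [e2, e3]
  have hk := key hMpsd h1Mpsd p
  have hpos := norm_nonneg (((p : ℝ) + 1) • (Bmat n γ Q ⊗ₖ (1 : Matrix (Fin d) (Fin d) ℝ)) ^ (p + 1)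
    - (p : ℝ) • (Bmat n γ Q ⊗ₖ (1 : Matrix (Fin d) (Fin d) ℝ)) ^ p)
  nlinarith [hk, hpos]
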